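/- arXiv:2103.15033 — 2 statements merged into one kernel-verified Lean document; each statement's English description precedes it below -/
import Mathlib

section
/- Let A ∈ ℝ^{N×N} be Hurwitz and P = Pᵀ ≻ 0 the unique solution of the Lyapunov equation AᵀP + PA = −I. Let φ : ℝⁿ → ℝᴺ be C² with Jacobian Φ(x) = Dφ(x) of full column rank n for all x, satisfying Φ(x) f(x) = A φ(x) for all x. Define M(x) = Φ(x)ᵀ P Φ(x). Then M(x) ≻ 0 for all x, and along the flow, (d/dt)M(X(x,t)) + F(X(x,t))ᵀ M(X(x,t)) + M(X(x,t)) F(X(x,t)) = −Φ(X(x,t))ᵀ Φ(X(x,t)) ≺ 0, where F(x) = Df(x). In particular, the system ẋ = f(x) is asymptotically contracting with metric M. -/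
open Matrix MeasureTheory

/-- Jacobian matrix of a map between finite-dimensional spaces. -/
noncomputable def jac {n N : ℕ} (φ : (Fin n → ℝ) → (Fin N → ℝ)) (x : Fin n → ℝ) :
    Matrix (Fin N) (Fin n) ℝ :=
  Matrix.of fun i j => fderiv ℝ φ x (Pi.single j 1) i

/-- A real square matrix is Hurwitz if all its (complex) eigenvalues have
negative real part. -/
def Hurwitz {N : ℕ} (A : Matrix (Fin N) (Fin N) ℝ) : Prop :=
  ∀ μ ∈ spectrum ℂ (A.map (Complex.ofReal ·)), μ.re < 0

/-- Euclidean norm on `Fin n → ℝ`. -/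
noncomputable def euclNorm {n : ℕ} (x : Fin n → ℝ) : ℝ :=
  Real.sqrt (∑ i, x i ^ 2)

lemma pi_single_sum {n : ℕ} (v : Fin n → ℝ) :
    ∑ j, v j • (Pi.single j 1 : Fin n → ℝ) = v := by
  funext i
  simp [Finset.sum_apply, Pi.single_apply]

lemma jac_mulVec {n N : ℕ} (φ : (Fin n → ℝ) → (Fin N → ℝ)) (x : Fin n → ℝ) (v : Fin n → ℝ) :
    (jac φ x) *ᵥ v = fderiv ℝ φ x v := by
  conv_rhs => rw [← pi_single_sum v, map_sum]
  funext a
  simp [jac, Matrix.mulVec, dotProduct, Finset.sum_apply, mul_comm]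

lemma rank_inj {n N : ℕ} (B : Matrix (Fin N) (Fin n) ℝ) (h : B.rank = n)
    {v : Fin n → ℝ} (hv : B *ᵥ v = 0) : v = 0 := by
  have h2 := LinearMap.finrank_range_add_finrank_ker B.mulVecLin
  rw [Module.finrank_pi, Fintype.card_fin] at h2
  rw [Matrix.rank] at h
  have hker : Module.finrank ℝ (LinearMap.ker B.mulVecLin) = 0 := by omega
  have hbot : LinearMap.ker B.mulVecLin = ⊥ := Submodule.finrank_eq_zero.mp hker
  have hvmem : v ∈ LinearMap.ker B.mulVecLin := by
    simpa [LinearMap.mem_ker, Matrix.mulVecLin_apply] using hv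
  rw [hbot, Submodule.mem_bot] at hvmem
  exact hvmem

lemma posdef_conj {n N : ℕ} {P : Matrix (Fin N) (Fin N) ℝ} (hP : P.PosDef)
    (B : Matrix (Fin N) (Fin n) ℝ) (hB : B.rank = n) : (Bᵀ * P * B).PosDef := by
  have hB' : Bᴴ = Bᵀ := conjTranspose_eq_transpose_of_trivial B
  rw [posDef_iff_dotProduct_mulVec]
  constructor
  · rw [← hB']; exact isHermitian_conjTranspose_mul_mul B hP.1
  · intro v hv
    have hBv : B *ᵥ v ≠ 0 := fun h => hv (rank_inj B hB h)
    have h2 := hP.dotProduct_mulVec_pos hBv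
    simpa [star_trivial, ← Matrix.mulVec_mulVec, dotProduct_mulVec,
      Matrix.vecMul_transpose] using h2

lemma jac_dot {n N : ℕ}
    (f : (Fin n → ℝ) → (Fin n → ℝ)) (hf : ContDiff ℝ 2 f)
    (φ : (Fin n → ℝ) → (Fin N → ℝ)) (hφ : ContDiff ℝ 2 φ)
    (A : Matrix (Fin N) (Fin N) ℝ)
    (hPDE : ∀ x, (jac φ x).mulVec (f x) = A.mulVec (φ x))
    (X : ℝ → (Fin n → ℝ)) (t : ℝ) (hX : HasDerivAt X (f (X t)) t)
    (a : Fin N) (i : Fin n) :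
    HasDerivAt (fun s => jac φ (X s) a i)
      ((A * jac φ (X t) - jac φ (X t) * jac f (X t)) a i) t := by
  set y := X t with hy
  have hφ1 : ContDiff ℝ 1 (fderiv ℝ φ) := hφ.fderiv_right (by norm_num)
  have hφd : Differentiable ℝ φ := hφ.differentiable (by norm_num)
  have hfd : Differentiable ℝ f := hf.differentiable (by norm_num)
  have hφ1d : Differentiable ℝ (fderiv ℝ φ) := hφ1.differentiable one_ne_zero
  set H := fderiv ℝ (fderiv ℝ φ) y with hH
  -- key identity from differentiating the PDE
  have hkey : ∀ v, (fderiv ℝ φ y).comp (fderiv ℝ f y) v + H v (f y)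
      = A *ᵥ (fderiv ℝ φ y v) := by
    intro v
    set L : (Fin N → ℝ) →L[ℝ] (Fin N → ℝ) := LinearMap.toContinuousLinearMap A.mulVecLin with hL
    have hq1 : HasFDerivAt (fun z => fderiv ℝ φ z (f z))
        ((fderiv ℝ φ y).comp (fderiv ℝ f y) + H.flip (f y)) y :=
      (hφ1d y).hasFDerivAt.clm_apply (hfd y).hasFDerivAt
    have hq2 : HasFDerivAt (fun z => L (φ z)) (L.comp (fderiv ℝ φ y)) y :=
      L.hasFDerivAt.comp y (hφd y).hasFDerivAt
    have heqfun : (fun z => fderiv ℝ φ z (f z)) = fun z => L (φ z) := by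
      funext z
      rw [← jac_mulVec, hPDE z]
      simp [hL]
    rw [heqfun] at hq1
    have huniq := hq1.unique hq2
    have h2 := congrArg (fun (T : (Fin n → ℝ) →L[ℝ] (Fin N → ℝ)) => T v) huniq
    simpa [hL] using h2
  -- derivative of the entry along the flow
  have hsymm := ((hφ.contDiffAt (x := y)).isSymmSndFDerivAt (by simp)).eq
  have h1 : HasDerivAt (fun s => jac φ (X s) a i) ((H (f y)) (Pi.single i 1) a) t := by
    set E1 : ((Fin n → ℝ) →L[ℝ] (Fin N → ℝ)) →L[ℝ] (Fin N → ℝ) :=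
      ContinuousLinearMap.apply ℝ (Fin N → ℝ) (Pi.single i 1) with hE1
    set E2 : (Fin N → ℝ) →L[ℝ] ℝ := ContinuousLinearMap.proj a with hE2
    have h3 : HasFDerivAt (fun z => (E2.comp E1) (fderiv ℝ φ z)) ((E2.comp E1).comp H) y :=
      (E2.comp E1).hasFDerivAt.comp y (hφ1d y).hasFDerivAt
    exact h3.comp_hasDerivAt t hX
  have h5 : (H (f y)) (Pi.single i 1) a = (A * jac φ y - jac φ y * jac f y) a i := by
    have hs : (H (f y)) (Pi.single i 1) a = (H (Pi.single i 1)) (f y) a := by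
      rw [hsymm (f y) (Pi.single i 1)]
    have hk2 : H (Pi.single i 1) (f y)
        = A *ᵥ (fderiv ℝ φ y (Pi.single i 1))
          - fderiv ℝ φ y (fderiv ℝ f y (Pi.single i 1)) := by
      have := eq_sub_of_add_eq' (hkey (Pi.single i 1))
      simpa using this
    have e1 : fderiv ℝ φ y (Pi.single i 1) = fun b => jac φ y b i := rfl
    have e2 : fderiv ℝ f y (Pi.single i 1) = fun j => jac f y j i := rfl
    rw [hs, hk2, e1, e2, ← jac_mulVec]
    simp [Matrix.mulVec, dotProduct, Matrix.mul_apply, Matrix.sub_apply]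
  exact h5 ▸ h1

/-- the metric `M = ΦᵀPΦ` is positive definite and satisfies
`Ṁ + FᵀM + MF = -ΦᵀΦ ≺ 0` along the flow. -/
theorem koopman_metric_contraction
    {n N : ℕ}
    (f : (Fin n → ℝ) → (Fin n → ℝ)) (hf : ContDiff ℝ 2 f)
    (φ : (Fin n → ℝ) → (Fin N → ℝ)) (hφ : ContDiff ℝ 2 φ)
    (A : Matrix (Fin N) (Fin N) ℝ) (hA : Hurwitz A)
    (P : Matrix (Fin N) (Fin N) ℝ) (hPsym : Pᵀ = P) (hPpos : P.PosDef)
    (hLyap : Aᵀ * P + P * A = -1)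
    (hPDE : ∀ x, (jac φ x).mulVec (f x) = A.mulVec (φ x))
    (hrank : ∀ x, (jac φ x).rank = n)
    (M : (Fin n → ℝ) → Matrix (Fin n) (Fin n) ℝ)
    (hM : ∀ x, M x = (jac φ x)ᵀ * P * jac φ x)
    (X : (Fin n → ℝ) → ℝ → (Fin n → ℝ))
    (hX0 : ∀ x, X x 0 = x)
    (hXode : ∀ x t, HasDerivAt (X x) (f (X x t)) t) :
    (∀ x, (M x).PosDef) ∧
    (∀ x t,
      (Matrix.of fun i j => deriv (fun s => M (X x s) i j) t) +
          (jac f (X x t))ᵀ * M (X x t) + M (X x t) * jac f (X x t) =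
        -((jac φ (X x t))ᵀ * jac φ (X x t)) ∧
      ((jac φ (X x t))ᵀ * jac φ (X x t)).PosDef) := by
  constructor
  · intro x
    rw [hM x]
    exact posdef_conj hPpos _ (hrank x)
  · intro x t
    set y := X x t with hy
    set Φ := jac φ y with hΦ
    set F := jac f y with hF
    set Φd := A * Φ - Φ * F with hΦd
    have hent : ∀ i j, HasDerivAt (fun s => M (X x s) i j)
        ((Φdᵀ * P * Φ + Φᵀ * P * Φd) i j) t := by
      intro i j
      have hrw : (fun s => M (X x s) i j)
          = fun s => ∑ b, ∑ a, jac φ (X x s) a i * P a b * jac φ (X x s) b j := by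
        funext s
        rw [hM]
        simp [Matrix.mul_apply, Matrix.transpose_apply, Finset.sum_mul]
      have hd : HasDerivAt
          (fun s => ∑ b, ∑ a, jac φ (X x s) a i * P a b * jac φ (X x s) b j)
          (∑ b, ∑ a, ((Φd a i * P a b) * Φ b j + (Φ a i * P a b) * Φd b j)) t := by
        apply HasDerivAt.fun_sum
        intro b _
        apply HasDerivAt.fun_sum
        intro a _
        exact ((jac_dot f hf φ hφ A hPDE (X x) t (hXode x t) a i).mul_const (P a b)).mul
          (jac_dot f hf φ hφ A hPDE (X x) t (hXode x t) b j)
      have hval : (∑ b, ∑ a, ((Φd a i * P a b) * Φ b j + (Φ a i * P a b) * Φd b j))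
          = (Φdᵀ * P * Φ + Φᵀ * P * Φd) i j := by
        simp [Matrix.mul_apply, Matrix.transpose_apply, Finset.sum_mul,
          Finset.sum_add_distrib]
      rw [hrw]
      exact hval ▸ hd
    have hD : (Matrix.of fun i j => deriv (fun s => M (X x s) i j) t)
        = Φdᵀ * P * Φ + Φᵀ * P * Φd := by
      ext i j
      exact (hent i j).deriv
    constructor
    · rw [hD, hM]
      have halg : Φdᵀ * P * Φ + Φᵀ * P * Φd + Fᵀ * (Φᵀ * P * Φ) + (Φᵀ * P * Φ) * F
          = Φᵀ * (Aᵀ * P + P * A) * Φ := by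
        rw [hΦd]
        simp only [Matrix.transpose_sub, Matrix.transpose_mul, Matrix.sub_mul,
          Matrix.mul_sub, Matrix.add_mul, Matrix.mul_add, Matrix.mul_assoc]
        abel
      rw [halg, hLyap]
      simp [Matrix.mul_neg, Matrix.neg_mul]
    · have := posdef_conj Matrix.PosDef.one Φ (hrank y)
      simpa using this
end

section
/- Consider the controlled system ẋ = f(x,u), f C². Suppose there exists a C² map φ : ℝⁿ → ℝᴺ with full-rank Jacobian Φ(x) = Dφ(x) and matrices A ∈ ℝ^{N×N}, B ∈ ℝ^{N×m} with Φ(x) f(x,u) = A φ(x) + B u for all x, u. If the pair (A,B) is stabilisable, i.e., there exist P = Pᵀ ≻ 0 and K̄ ∈ ℝ^{m×N} with P(A + BK̄) + (A + BK̄)ᵀ P ≺ 0, then M(x) := Φ(x)ᵀ P Φ(x) and K(x) := K̄ Φ(x) satisfy the strong control contraction metric inequality: Ṁ + MF + FᵀM + MGK + (GK)ᵀM ≺ 0 evaluated along trajectories of the closed-loop system u = K̄φ(x), where F = ∂f/∂x(x, K̄φ(x)) and G = ∂f/∂u(x, K̄φ(x)). -/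
open Matrix MeasureTheory

section CCMhelpers

variable {E F G' : Type*} [NormedAddCommGroup E] [NormedSpace ℝ E]
  [NormedAddCommGroup F] [NormedSpace ℝ F] [NormedAddCommGroup G'] [NormedSpace ℝ G']

lemma clm_comp_fderiv' (L : F →L[ℝ] G') {g : E → F} {x : E} (hg : DifferentiableAt ℝ g x) :
    fderiv ℝ (fun y => L (g y)) x = L.comp (fderiv ℝ g x) :=
  (L.hasFDerivAt.comp x hg.hasFDerivAt).fderiv

lemma fderiv_pi_comp {l : ℕ} {g : E → (Fin l → ℝ)} {x : E} (hg : DifferentiableAt ℝ g x)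
    (i : Fin l) (v : E) :
    fderiv ℝ (fun y => g y i) x v = fderiv ℝ g x v i := by
  have h : (fun y => g y i)
      = fun y => (ContinuousLinearMap.proj (R := ℝ) (φ := fun _ : Fin l => ℝ) i) (g y) := rfl
  rw [h, clm_comp_fderiv' _ hg]; rfl

lemma fderiv_snd_apply {g : E → F} {x : E}
    (hg : DifferentiableAt ℝ (fderiv ℝ g) x) (w : E) (v : E) :
    fderiv ℝ (fun y => fderiv ℝ g y w) x v = fderiv ℝ (fderiv ℝ g) x v w := by
  have h : (fun y => fderiv ℝ g y w)
      = fun y => (ContinuousLinearMap.apply ℝ F w) (fderiv ℝ g y) := rfl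
  rw [h, clm_comp_fderiv' _ hg]; rfl

lemma clm_mulVec {k l : ℕ} (c : (Fin k → ℝ) →L[ℝ] (Fin l → ℝ)) (v : Fin k → ℝ) :
    (Matrix.of fun i j => c (Pi.single j 1) i).mulVec v = c v := by
  funext i
  have h := LinearMap.pi_apply_eq_sum_univ
    ((LinearMap.proj i).comp (c : (Fin k → ℝ) →ₗ[ℝ] (Fin l → ℝ))) v
  simp only [LinearMap.coe_comp, Function.comp_apply, LinearMap.proj_apply,
    ContinuousLinearMap.coe_coe] at h
  have h2 : ∀ j : Fin k, (fun j' => if j = j' then (1:ℝ) else 0) = Pi.single j 1 := by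
    intro j; funext j'; simp [Pi.single_apply, eq_comm]
  simp only [Matrix.mulVec, dotProduct, Matrix.of_apply]
  rw [h]
  refine Finset.sum_congr rfl fun j _ => ?_
  rw [h2 j, smul_eq_mul]; ring

lemma jac_mulVec_s7 {k l : ℕ} (ψ : (Fin k → ℝ) → (Fin l → ℝ)) (y : Fin k → ℝ) (v : Fin k → ℝ) :
    (jac ψ y).mulVec v = fderiv ℝ ψ y v :=
  clm_mulVec (fderiv ℝ ψ y) v

lemma fderiv_dotProduct' {l : ℕ} {u v : E → (Fin l → ℝ)} {x : E}
    (hu : DifferentiableAt ℝ u x) (hv : DifferentiableAt ℝ v x) (w : E) :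
    fderiv ℝ (fun y => dotProduct (u y) (v y)) x w
      = dotProduct (fderiv ℝ u x w) (v x) + dotProduct (u x) (fderiv ℝ v x w) := by
  have hcomp : ∀ (g : E → Fin l → ℝ), DifferentiableAt ℝ g x →
      ∀ a : Fin l, DifferentiableAt ℝ (fun y => g y a) x := by
    intro g hg a
    exact (ContinuousLinearMap.proj (R := ℝ) (φ := fun _ : Fin l => ℝ) a).differentiableAt.comp x hg
  simp only [dotProduct]
  rw [fderiv_fun_sum (A := fun a y => u y a * v y a) (fun a _ => ((hcomp u hu a).mul (hcomp v hv a)))]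
  rw [ContinuousLinearMap.sum_apply, ← Finset.sum_add_distrib]
  refine Finset.sum_congr rfl fun a _ => ?_
  rw [fderiv_fun_mul (hcomp u hu a) (hcomp v hv a)]
  simp [fderiv_pi_comp hu a w, fderiv_pi_comp hv a w]; ring

end CCMhelpers

/-- a Koopman mapping linearising the controlled dynamics with a
stabilisable pair `(A,B)` yields a strong control contraction metric
`M(x) = ΦᵀPΦ` with differential gain `K(x) = K̄Φ(x)`. -/
theorem koopman_implies_CCM
    {n N m : ℕ}
    (f : (Fin n → ℝ) → (Fin m → ℝ) → (Fin n → ℝ))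
    (hf : ContDiff ℝ 2 (fun p : (Fin n → ℝ) × (Fin m → ℝ) => f p.1 p.2))
    (φ : (Fin n → ℝ) → (Fin N → ℝ)) (hφ : ContDiff ℝ 2 φ)
    (hrank : ∀ x, (jac φ x).rank = n)
    (A : Matrix (Fin N) (Fin N) ℝ) (B : Matrix (Fin N) (Fin m) ℝ)
    (hPDE : ∀ x u, (jac φ x).mulVec (f x u) = A.mulVec (φ x) + B.mulVec u)
    (P : Matrix (Fin N) (Fin N) ℝ) (hPsym : Pᵀ = P) (hPpos : P.PosDef)
    (Kbar : Matrix (Fin m) (Fin N) ℝ)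
    (hstab : (-(P * (A + B * Kbar) + (A + B * Kbar)ᵀ * P)).PosDef)
    (M : (Fin n → ℝ) → Matrix (Fin n) (Fin n) ℝ)
    (hM : ∀ x, M x = (jac φ x)ᵀ * P * jac φ x)
    (K : (Fin n → ℝ) → Matrix (Fin m) (Fin n) ℝ)
    (hK : ∀ x, K x = Kbar * jac φ x) :
    ∀ x,
      (-(((Matrix.of fun i j =>
            fderiv ℝ (fun y => M y i j) x (f x (Kbar.mulVec (φ x))))) +
          M x * jac (fun y => f y (Kbar.mulVec (φ x))) x +
          (jac (fun y => f y (Kbar.mulVec (φ x))) x)ᵀ * M x +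
          M x * (jac (fun v => f x v) (Kbar.mulVec (φ x)) * K x) +
          (jac (fun v => f x v) (Kbar.mulVec (φ x)) * K x)ᵀ * M x)).PosDef := by
  intro x
  set u₀ : Fin m → ℝ := Kbar.mulVec (φ x) with hu₀
  set v₀ : Fin n → ℝ := f x u₀ with hv₀
  set Φ : Matrix (Fin N) (Fin n) ℝ := jac φ x with hΦdef
  set F₀ : Matrix (Fin n) (Fin n) ℝ := jac (fun y => f y u₀) x with hF₀
  set G₀ : Matrix (Fin n) (Fin m) ℝ := jac (fun v => f x v) u₀ with hG₀
  -- differentiability facts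
  have hφd : Differentiable ℝ φ := hφ.differentiable (by norm_num)
  have hφ'c : ContDiff ℝ 1 (fderiv ℝ φ) := hφ.fderiv_right (by norm_num)
  have hφ'd : Differentiable ℝ (fderiv ℝ φ) := hφ'c.differentiable (by norm_num)
  have hfd : Differentiable ℝ (fun p : (Fin n → ℝ) × (Fin m → ℝ) => f p.1 p.2) :=
    hf.differentiable (by norm_num)
  have hf1 : Differentiable ℝ (fun y => f y u₀) :=
    hfd.comp (differentiable_id.prodMk (differentiable_const _))
  have hf2 : Differentiable ℝ (fun v => f x v) :=
    hfd.comp ((differentiable_const _).prodMk differentiable_id)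
  have hsymm : IsSymmSndFDerivAt ℝ φ x := hφ.contDiffAt.isSymmSndFDerivAt (by norm_num)
  -- the matrix of second derivatives in direction v₀
  set D : Matrix (Fin N) (Fin n) ℝ :=
    Matrix.of (fun i k => fderiv ℝ (fderiv ℝ φ) x v₀ (Pi.single k 1) i) with hD
  -- fact 1 : Φ * G₀ = B
  have fact1 : Φ * G₀ = B := by
    have h1 : (fun u => fderiv ℝ φ x (f x u))
        = fun u => A.mulVec (φ x) + B.mulVec u := by
      funext u; rw [← jac_mulVec_s7 φ x, hPDE]
    have hL : fderiv ℝ (fun u => fderiv ℝ φ x (f x u)) u₀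
        = (fderiv ℝ φ x).comp (fderiv ℝ (fun v => f x v) u₀) :=
      clm_comp_fderiv' (fderiv ℝ φ x) hf2.differentiableAt
    have hR : fderiv ℝ (fun u => A.mulVec (φ x) + B.mulVec u) u₀
        = LinearMap.toContinuousLinearMap B.mulVecLin := by
      have e1 : (fun u : Fin m → ℝ => A.mulVec (φ x) + B.mulVec u)
          = fun u => A.mulVec (φ x) + (LinearMap.toContinuousLinearMap B.mulVecLin) u := by
        funext u; simp
      rw [e1, fderiv_const_add]
      exact (LinearMap.toContinuousLinearMap B.mulVecLin).fderiv
    rw [h1, hR] at hL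
    ext i j
    have hv := congrArg (fun L : (Fin m → ℝ) →L[ℝ] (Fin N → ℝ) => L (Pi.single j 1)) hL.symm
    simp only [ContinuousLinearMap.comp_apply, LinearMap.coe_toContinuousLinearMap', LinearMap.coe_toContinuousLinearMap,
      Matrix.mulVecLin_apply] at hv
    rw [← jac_mulVec_s7 (fun v => f x v) u₀, ← jac_mulVec_s7 φ x, ← hΦdef, ← hG₀,
      Matrix.mulVec_mulVec] at hv
    have := congrFun hv i
    simpa [Matrix.mulVec_single] using this
  -- fact 2 : D + Φ * F₀ = A * Φ
  have fact2 : D + Φ * F₀ = A * Φ := by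
    have h1 : (fun y => fderiv ℝ φ y (f y u₀)) = fun y => A.mulVec (φ y) + B.mulVec u₀ := by
      funext y; rw [← jac_mulVec_s7 φ y, hPDE]
    have hL : fderiv ℝ (fun y => fderiv ℝ φ y (f y u₀)) x
        = (fderiv ℝ φ x).comp (fderiv ℝ (fun y => f y u₀) x)
          + (fderiv ℝ (fderiv ℝ φ) x).flip (f x u₀) :=
      fderiv_clm_apply hφ'd.differentiableAt hf1.differentiableAt
    have hR : fderiv ℝ (fun y => A.mulVec (φ y) + B.mulVec u₀) x
        = (LinearMap.toContinuousLinearMap A.mulVecLin).comp (fderiv ℝ φ x) := by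
      have e1 : (fun y => A.mulVec (φ y) + B.mulVec u₀)
          = fun y => (LinearMap.toContinuousLinearMap A.mulVecLin) (φ y) + B.mulVec u₀ := by
        funext y; simp
      rw [e1, fderiv_add_const]
      exact clm_comp_fderiv' _ hφd.differentiableAt
    rw [h1, hR] at hL
    ext i j
    have hv := congrArg (fun L : (Fin n → ℝ) →L[ℝ] (Fin N → ℝ) => L (Pi.single j 1)) hL
    simp only [ContinuousLinearMap.comp_apply, ContinuousLinearMap.add_apply,
      ContinuousLinearMap.flip_apply, LinearMap.coe_toContinuousLinearMap', LinearMap.coe_toContinuousLinearMap,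
      Matrix.mulVecLin_apply] at hv
    rw [hsymm (Pi.single j 1) (f x u₀)] at hv
    rw [← jac_mulVec_s7 (fun y => f y u₀) x, ← jac_mulVec_s7 φ x, ← jac_mulVec_s7 φ x,
      ← hΦdef, ← hF₀, Matrix.mulVec_mulVec, ← Matrix.mulVec_mulVec] at hv
    rw [Matrix.mulVec_mulVec, Matrix.mulVec_mulVec] at hv
    have h3 := congrFun hv i
    have hDij : D i j = ((fderiv ℝ (fderiv ℝ φ) x) (f x u₀)) (Pi.single j 1) i := rfl
    simp only [Matrix.mulVec_single_one, Matrix.col_apply, mul_one, Pi.add_apply] at h3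
    simp only [Matrix.add_apply, hDij]
    linarith [h3]
  -- fact 3 : the matrix Ṁ equals Dᵀ P Φ + Φᵀ P D
  have fact3 : (Matrix.of fun i j => fderiv ℝ (fun y => M y i j) x v₀)
      = Dᵀ * P * Φ + Φᵀ * P * D := by
    have hMentry : ∀ (i j : Fin n), (fun y => M y i j)
        = fun y => dotProduct (fderiv ℝ φ y (Pi.single i 1))
            (P.mulVec (fderiv ℝ φ y (Pi.single j 1))) := by
      intro i j; funext y
      rw [hM, ← jac_mulVec_s7 φ y, ← jac_mulVec_s7 φ y]
      simp only [Matrix.mulVec_single_one, Matrix.col_apply, mul_one]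
      simp only [Matrix.mul_apply, Matrix.transpose_apply, Matrix.mulVec, dotProduct,
        Finset.sum_mul, Finset.mul_sum, Matrix.col_apply]
      rw [Finset.sum_comm]
      exact Finset.sum_congr rfl fun a _ => Finset.sum_congr rfl fun b _ => by ring
    have dot_helper : ∀ (X Y : Matrix (Fin N) (Fin n) ℝ) (i j : Fin n),
        dotProduct (fun a => X a i) (P.mulVec fun a => Y a j) = (Xᵀ * P * Y) i j := by
      intro X Y i j
      simp only [Matrix.mul_apply, Matrix.transpose_apply, Matrix.mulVec, dotProduct,
        Finset.sum_mul, Finset.mul_sum]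
      rw [Finset.sum_comm]
      exact Finset.sum_congr rfl fun a _ => Finset.sum_congr rfl fun b _ => by ring
    ext i j
    have hu' : DifferentiableAt ℝ (fun y => fderiv ℝ φ y (Pi.single i 1)) x :=
      (hφ'd.clm_apply (differentiable_const _)).differentiableAt
    have hv'' : DifferentiableAt ℝ (fun y => fderiv ℝ φ y (Pi.single j 1)) x :=
      (hφ'd.clm_apply (differentiable_const _)).differentiableAt
    have e1 : (fun y => P.mulVec (fderiv ℝ φ y (Pi.single j 1)))
        = fun y => (LinearMap.toContinuousLinearMap P.mulVecLin) (fderiv ℝ φ y (Pi.single j 1)) := by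
      funext y; simp
    have hv' : DifferentiableAt ℝ (fun y => P.mulVec (fderiv ℝ φ y (Pi.single j 1))) x := by
      rw [e1]
      exact ((LinearMap.toContinuousLinearMap P.mulVecLin).differentiable.comp
        (hφ'd.clm_apply (differentiable_const _))).differentiableAt
    rw [Matrix.of_apply, hMentry i j, fderiv_dotProduct' hu' hv' v₀]
    have hdu : fderiv ℝ (fun y => fderiv ℝ φ y (Pi.single i 1)) x v₀
        = fderiv ℝ (fderiv ℝ φ) x v₀ (Pi.single i 1) :=
      fderiv_snd_apply hφ'd.differentiableAt _ _
    have hdv : fderiv ℝ (fun y => P.mulVec (fderiv ℝ φ y (Pi.single j 1))) x v₀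
        = P.mulVec (fderiv ℝ (fderiv ℝ φ) x v₀ (Pi.single j 1)) := by
      rw [e1, clm_comp_fderiv' _ hv'']
      simp [fderiv_snd_apply hφ'd.differentiableAt]
    rw [hdu, hdv]
    have hcol : ∀ k : Fin n, fderiv ℝ (fderiv ℝ φ) x v₀ (Pi.single k 1) = fun a => D a k :=
      fun k => rfl
    have hcolΦ : ∀ k : Fin n, fderiv ℝ φ x (Pi.single k 1) = fun a => Φ a k := by
      intro k
      rw [← jac_mulVec_s7 φ x]
      funext a
      simp [Matrix.mulVec_single]
      rfl
    rw [hcol i, hcol j, hcolΦ i, hcolΦ j, dot_helper D Φ i j, dot_helper Φ D i j,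
      Matrix.add_apply]
  -- algebraic reduction
  have keyeq : (-(((Matrix.of fun i j => fderiv ℝ (fun y => M y i j) x v₀)) +
          M x * F₀ + F₀ᵀ * M x + M x * (G₀ * K x) + (G₀ * K x)ᵀ * M x))
      = Φᵀ * (-(P * (A + B * Kbar) + (A + B * Kbar)ᵀ * P)) * Φ := by
    have hDval : D = A * Φ - Φ * F₀ := eq_sub_of_add_eq fact2
    have fact1' : Φ * (G₀ * (Kbar * Φ)) = B * (Kbar * Φ) := by
      rw [← Matrix.mul_assoc, fact1]
    have fact1t : G₀ᵀ * (Φᵀ * (P * Φ)) = Bᵀ * (P * Φ) := by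
      rw [← Matrix.mul_assoc, ← Matrix.transpose_mul, fact1]
    rw [fact3, hM x, hK x, ← hΦdef, hDval]
    simp only [Matrix.transpose_sub, Matrix.transpose_mul, Matrix.transpose_add,
      Matrix.transpose_transpose, hPsym, Matrix.sub_mul, Matrix.mul_sub, Matrix.add_mul,
      Matrix.mul_add, Matrix.mul_assoc, neg_add, Matrix.mul_neg, Matrix.neg_mul]
    rw [fact1', fact1t]
    abel
  rw [keyeq]
  -- positivity
  have hinj : Function.Injective (jac φ x).mulVecLin := by
    rw [← LinearMap.ker_eq_bot]
    have hr := hrank x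
    rw [Matrix.rank] at hr
    have h2 := LinearMap.finrank_range_add_finrank_ker (jac φ x).mulVecLin
    rw [hr, Module.finrank_fin_fun] at h2
    have h4 : Module.finrank ℝ (LinearMap.ker (jac φ x).mulVecLin) = 0 := by omega
    exact Submodule.finrank_eq_zero.mp h4
  rw [Matrix.posDef_iff_dotProduct_mulVec]
  constructor
  · exact Matrix.isHermitian_mul_mul_conjTranspose Φᵀ hstab.1
  · intro v hv
    have hne : Φ.mulVec v ≠ 0 := by
      intro h0
      apply hv
      have : (jac φ x).mulVecLin v = (jac φ x).mulVecLin 0 := by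
        simp only [Matrix.mulVecLin_apply, Matrix.mulVec_zero]
        rw [← hΦdef]; exact h0
      exact hinj this
    have hpos := (Matrix.posDef_iff_dotProduct_mulVec.mp hstab).2 (x := Φ.mulVec v) hne
    rw [← Matrix.mulVec_mulVec, ← Matrix.mulVec_mulVec, dotProduct_mulVec,
      show star v = v from rfl, Matrix.vecMul_transpose]
    simpa using hpos
end
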